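/- arXiv:1412.8709 — 2 statements merged into one kernel-verified Lean document; each statement's English description precedes it below -/
import Mathlib

section
/- There exists a finite connected simple graph G without non-trivial bridges that contains two bad leaves at distance exactly 4 such that the square G² of G contains no [2,4]-factor. (Hence the distance bound 5 in the hypothesis 'any two bad leaves have distance at least 5' cannot be relaxed to 4.) -/
open SimpleGraph

variable {V : Type*}

/-- The square of a simple graph: two distinct vertices are adjacent iff their
distance in `G` is at most `2`, i.e. they are adjacent in `G` or have a common
neighbor in `G`. -/
def SimpleGraph.square (G : SimpleGraph V) : SimpleGraph V where
  Adj v w := v ≠ w ∧ (G.Adj v w ∨ ∃ u, G.Adj v u ∧ G.Adj u w)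
  symm := by
    constructor
    rintro v w ⟨hne, h | ⟨u, h1, h2⟩⟩
    · exact ⟨hne.symm, Or.inl h.symm⟩
    · exact ⟨hne.symm, Or.inr ⟨u, h2.symm, h1.symm⟩⟩
  loopless := by constructor; rintro v ⟨hne, -⟩; exact hne rfl

/-- The degree of a vertex, as the natural cardinality of its neighbor set. -/
noncomputable def degCount (G : SimpleGraph V) (v : V) : ℕ := (G.neighborSet v).ncard

/-- A leaf is a vertex of degree 1. -/
def IsLeaf (G : SimpleGraph V) (x : V) : Prop := degCount G x = 1

/-- `v` is a cut vertex of `G` if deleting `v` disconnects two vertices that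
were connected in `G`. -/
def IsCutVertex (G : SimpleGraph V) (v : V) : Prop :=
  ∃ a b : ({v}ᶜ : Set V), G.Reachable a b ∧ ¬ (G.induce ({v}ᶜ : Set V)).Reachable a b

/-- The set of leaves of `G` adjacent to `y`. -/
def leafNbrs (G : SimpleGraph V) (y : V) : Set V := {x | IsLeaf G x ∧ G.Adj y x}

/-- A cut vertex `y` is trivial if `y` is not a cut vertex of `G - M`, where `M`
is the set of all leaves adjacent to `y`. -/
def IsTrivialCutVertex (G : SimpleGraph V) (y : V) : Prop :=
  IsCutVertex G y ∧
    ¬ IsCutVertex (G.induce (leafNbrs G y)ᶜ) ⟨y, fun h => G.loopless.irrefl y h.2⟩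

/-- A leaf `x` with neighbor `y` is a bad leaf if `x` is the only leaf adjacent
to `y` and `y` is a trivial cut vertex of `G`. -/
def IsBadLeaf (G : SimpleGraph V) (x : V) : Prop :=
  IsLeaf G x ∧ ∃ y, G.Adj y x ∧ (∀ z, IsLeaf G z → G.Adj y z → z = x) ∧
    IsTrivialCutVertex G y

/-- A trivial bridge is a bridge incident with a leaf. -/
def IsTrivialBridge (G : SimpleGraph V) (e : Sym2 V) : Prop :=
  G.IsBridge e ∧ ∃ x ∈ e, IsLeaf G x

/-- A `[2,4]`-factor of `H`: a connected spanning subgraph in which every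
vertex has degree `2` or `4`. -/
def IsTwoFourFactor (H F : SimpleGraph V) : Prop :=
  F ≤ H ∧ F.Connected ∧ ∀ v, degCount F v = 2 ∨ degCount F v = 4

/-- A `[2,2s]`-factor of `H`: a connected spanning subgraph in which every
vertex has positive even degree at most `2 * s`. -/
def IsConnEvenFactor (H F : SimpleGraph V) (s : ℕ) : Prop :=
  F ≤ H ∧ F.Connected ∧
    ∀ v, degCount F v ≠ 0 ∧ Even (degCount F v) ∧ degCount F v ≤ 2 * s

/-- `G` is essentially 2-edge connected if deleting any single edge of `G`
cannot result in a graph with two components each having at least two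
vertices. -/
def EssentiallyTwoEdgeConnected (G : SimpleGraph V) : Prop :=
  ∀ a b : V, G.Adj a b →
    ¬ ∃ u v : V, ¬ (G.deleteEdges {s(a, b)}).Reachable u v ∧
      (∃ u', u' ≠ u ∧ (G.deleteEdges {s(a, b)}).Reachable u u') ∧
      (∃ v', v' ≠ v ∧ (G.deleteEdges {s(a, b)}).Reachable v v')

/-- A graph is 2-connected if it has at least three vertices, is connected, and
has no cut vertex. -/
def TwoConnected (G : SimpleGraph V) : Prop :=
  3 ≤ Nat.card V ∧ G.Connected ∧ ∀ v, ¬ IsCutVertex G v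


private def rel (u v : ℕ) : Prop :=
  (u = 0 ∧ v = 1) ∨ (u ≤ 1 ∧ 2 ≤ v ∧ v ≤ 10) ∨ (2 ≤ u ∧ u ≤ 10 ∧ v = u + 9)

private def Gex : SimpleGraph (Fin 20) where
  Adj a b := rel a.val b.val ∨ rel b.val a.val
  symm := ⟨fun _ _ h => Or.symm h⟩
  loopless := ⟨fun a (h : rel a.val a.val ∨ rel a.val a.val) => by unfold rel at h; omega⟩

private lemma gadj {a b : Fin 20} : Gex.Adj a b ↔ rel a.val b.val ∨ rel b.val a.val := Iff.rfl

private lemma adj_iff_of_big {a : Fin 20} (ha : 11 ≤ a.val) (w : Fin 20) :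
    Gex.Adj a w ↔ w.val = a.val - 9 := by
  have := a.isLt; have := w.isLt
  rw [gadj]; unfold rel; omega

private lemma adj_iff_of_mid {a : Fin 20} (h2 : 2 ≤ a.val) (h10 : a.val ≤ 10) (w : Fin 20) :
    Gex.Adj a w ↔ w.val = 0 ∨ w.val = 1 ∨ w.val = a.val + 9 := by
  have := a.isLt; have := w.isLt
  rw [gadj]; unfold rel; omega

private lemma isLeaf_big {a : Fin 20} (ha : 11 ≤ a.val) : IsLeaf Gex a := by
  have hset : Gex.neighborSet a = {⟨a.val - 9, by have := a.isLt; omega⟩} := by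
    ext w
    simp only [mem_neighborSet, Set.mem_singleton_iff, adj_iff_of_big ha, Fin.ext_iff]
  unfold IsLeaf degCount
  rw [hset, Set.ncard_singleton]

private lemma adjv {a : Fin 20} {n : ℕ} (hn : n < 20)
    (h : rel a.val n ∨ rel n a.val) : Gex.Adj a ⟨n, hn⟩ := h

private lemma not_isLeaf_small {a : Fin 20} (ha : a.val ≤ 10) : ¬ IsLeaf Gex a := by
  intro h
  unfold IsLeaf degCount at h
  rw [Set.ncard_eq_one] at h
  obtain ⟨c, hc⟩ := h
  by_cases h1 : a.val ≤ 1
  · have e2 : (⟨2, by omega⟩ : Fin 20) = c := by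
      have m : (⟨2, by omega⟩ : Fin 20) ∈ Gex.neighborSet a :=
        adjv (by omega) (by unfold rel; omega)
      rw [hc] at m; exact m
    have e3 : (⟨3, by omega⟩ : Fin 20) = c := by
      have m : (⟨3, by omega⟩ : Fin 20) ∈ Gex.neighborSet a :=
        adjv (by omega) (by unfold rel; omega)
      rw [hc] at m; exact m
    have c2 : (2:ℕ) = c.val := congrArg Fin.val e2
    have c3 : (3:ℕ) = c.val := congrArg Fin.val e3
    omega
  · have e2 : (⟨0, by omega⟩ : Fin 20) = c := by
      have m : (⟨0, by omega⟩ : Fin 20) ∈ Gex.neighborSet a :=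
        adjv (by omega) (by unfold rel; omega)
      rw [hc] at m; exact m
    have e3 : (⟨1, by omega⟩ : Fin 20) = c := by
      have m : (⟨1, by omega⟩ : Fin 20) ∈ Gex.neighborSet a :=
        adjv (by omega) (by unfold rel; omega)
      rw [hc] at m; exact m
    have c2 : (0:ℕ) = c.val := congrArg Fin.val e2
    have c3 : (1:ℕ) = c.val := congrArg Fin.val e3
    omega

private lemma reach_of_step {W : Type*} (H : SimpleGraph W) (t : W) (f : W → ℕ)
    (h : ∀ v, v ≠ t → ∃ u, H.Adj v u ∧ f u < f v) :
    ∀ (n : ℕ) (v : W), f v ≤ n → H.Reachable v t := by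
  intro n
  induction n with
  | zero =>
    intro v hv
    by_cases hvt : v = t
    · exact hvt ▸ Reachable.refl v
    · obtain ⟨u, _, hf⟩ := h v hvt; omega
  | succ n ih =>
    intro v hv
    by_cases hvt : v = t
    · exact hvt ▸ Reachable.refl v
    · obtain ⟨u, hu, hf⟩ := h v hvt
      exact hu.reachable.trans (ih u (by omega))

private lemma reachable_eq_of_isolated {W : Type*} {H : SimpleGraph W} {a b : W}
    (h : ∀ c, ¬ H.Adj a c) (hr : H.Reachable a b) : b = a := by
  obtain ⟨p⟩ := hr
  cases p with
  | nil => rfl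
  | cons h' _ => exact absurd h' (h _)

private lemma reach0 (v : Fin 20) : Gex.Reachable v ⟨0, by omega⟩ := by
  refine reach_of_step Gex _ (fun w => w.val) ?_ v.val v le_rfl
  intro w hw
  have hw20 := w.isLt
  have hw0 : w.val ≠ 0 := fun h => hw (Fin.ext h)
  by_cases h10 : w.val ≤ 10
  · refine ⟨⟨0, by omega⟩, ?_, ?_⟩
    · show rel w.val 0 ∨ rel 0 w.val
      unfold rel; omega
    · show (0:ℕ) < w.val
      omega
  · refine ⟨⟨w.val - 9, by omega⟩, ?_, ?_⟩
    · show rel (w.val) (w.val - 9) ∨ rel (w.val - 9) (w.val)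
      unfold rel; omega
    · show w.val - 9 < w.val
      omega

private lemma conn : Gex.Connected :=
  ⟨fun u v => (reach0 u).trans (reach0 v).symm⟩

private def fd (v : Fin 20) : ℕ :=
  if v.val = 11 then 0 else if v.val = 2 then 1 else if v.val ≤ 1 then 2
  else if v.val ≤ 10 then 3 else 4

private lemma fd_adj {a b : Fin 20} (h : Gex.Adj a b) : fd b ≤ fd a + 1 := by
  have := a.isLt; have := b.isLt
  rw [gadj] at h; unfold rel at h
  unfold fd; split_ifs <;> omega

private lemma fd_walk {u v : Fin 20} (p : Gex.Walk u v) : fd v ≤ fd u + p.length := by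
  induction p with
  | nil => simp
  | cons h q ih =>
    rw [Walk.length_cons]
    have := fd_adj h
    omega

private lemma dist_x : Gex.dist ⟨11, by omega⟩ ⟨12, by omega⟩ = 4 := by
  have h1 : Gex.Adj ⟨11, by omega⟩ ⟨2, by omega⟩ := by
    show rel 11 2 ∨ rel 2 11; unfold rel; omega
  have h2 : Gex.Adj ⟨2, by omega⟩ ⟨0, by omega⟩ := by
    show rel 2 0 ∨ rel 0 2; unfold rel; omega
  have h3 : Gex.Adj ⟨0, by omega⟩ ⟨3, by omega⟩ := by
    show rel 0 3 ∨ rel 3 0; unfold rel; omega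
  have h4 : Gex.Adj ⟨3, by omega⟩ ⟨12, by omega⟩ := by
    show rel 3 12 ∨ rel 12 3; unfold rel; omega
  let p : Gex.Walk ⟨11, by omega⟩ ⟨12, by omega⟩ :=
    .cons h1 (.cons h2 (.cons h3 (.cons h4 .nil)))
  have hub : Gex.dist ⟨11, by omega⟩ ⟨12, by omega⟩ ≤ 4 := by
    have hd := SimpleGraph.dist_le p
    have hl : p.length = 4 := rfl
    omega
  obtain ⟨q, hq⟩ := Reachable.exists_walk_length_eq_dist ⟨p⟩
  have hlb := fd_walk q
  have e1 : fd ⟨11, by omega⟩ = 0 := rfl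
  have e2 : fd ⟨12, by omega⟩ = 4 := rfl
  omega
private lemma del_adj {a b x y : Fin 20} (h : Gex.Adj x y) (hne : s(x,y) ≠ s(a,b)) :
    (Gex \ SimpleGraph.fromEdgeSet {s(a,b)}).Adj x y := by
  rw [SimpleGraph.sdiff_adj]
  refine ⟨h, ?_⟩
  rw [SimpleGraph.fromEdgeSet_adj]
  simp only [Set.mem_singleton_iff]
  tauto

private lemma bridges : ∀ e : Sym2 (Fin 20), Gex.IsBridge e → IsTrivialBridge Gex e := by
  intro e
  induction e using Sym2.ind with
  | _ a b =>
    intro hb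
    have hadj : Gex.Adj a b := (hb.reachable_iff_adj).mp (conn.preconnected a b)
    have hnr := SimpleGraph.isBridge_iff.mp hb
    have ha20 := a.isLt
    have hb20 := b.isLt
    by_cases hA : 11 ≤ a.val
    · exact ⟨hb, a, Sym2.mem_mk_left a b, isLeaf_big hA⟩
    by_cases hB : 11 ≤ b.val
    · exact ⟨hb, b, Sym2.mem_mk_right a b, isLeaf_big hB⟩
    exfalso
    apply hnr
    have hr := gadj.mp hadj
    unfold rel at hr
    by_cases hc : a.val ≤ 1 ∧ b.val ≤ 1
    · -- midpoint ⟨2⟩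
      have h1 : Gex.Adj a ⟨2, by omega⟩ := adjv (by omega) (by unfold rel; omega)
      have h2 : Gex.Adj (⟨2, by omega⟩ : Fin 20) b :=
        (adjv (n := 2) (by omega) (by unfold rel; omega) : Gex.Adj b ⟨2, by omega⟩).symm
      refine ((del_adj h1 ?_).reachable).trans ((del_adj h2 ?_).reachable)
      · intro h
        rw [Sym2.eq_iff] at h
        simp only [Fin.ext_iff, Fin.val_mk] at h
        omega
      · intro h
        rw [Sym2.eq_iff] at h
        simp only [Fin.ext_iff, Fin.val_mk] at h
        omega
    · by_cases hd : a.val ≤ 1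
      · -- a hub, 2 ≤ b.val ≤ 10 ; midpoint other hub
        have h1 : Gex.Adj a ⟨1 - a.val, by omega⟩ := adjv (by omega) (by unfold rel; omega)
        have h2 : Gex.Adj (⟨1 - a.val, by omega⟩ : Fin 20) b :=
          (adjv (n := 1 - a.val) (by omega) (by unfold rel; omega) :
            Gex.Adj b ⟨1 - a.val, by omega⟩).symm
        refine ((del_adj h1 ?_).reachable).trans ((del_adj h2 ?_).reachable)
        · intro h
          rw [Sym2.eq_iff] at h
          simp only [Fin.ext_iff, Fin.val_mk] at h
          omega
        · intro h
          rw [Sym2.eq_iff] at h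
          simp only [Fin.ext_iff, Fin.val_mk] at h
          omega
      · -- b hub, 2 ≤ a.val ≤ 10
        have h1 : Gex.Adj a ⟨1 - b.val, by omega⟩ := adjv (by omega) (by unfold rel; omega)
        have h2 : Gex.Adj (⟨1 - b.val, by omega⟩ : Fin 20) b :=
          (adjv (n := 1 - b.val) (by omega) (by unfold rel; omega) :
            Gex.Adj b ⟨1 - b.val, by omega⟩).symm
        refine ((del_adj h1 ?_).reachable).trans ((del_adj h2 ?_).reachable)
        · intro h
          rw [Sym2.eq_iff] at h
          simp only [Fin.ext_iff, Fin.val_mk] at h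
          omega
        · intro h
          rw [Sym2.eq_iff] at h
          simp only [Fin.ext_iff, Fin.val_mk] at h
          omega
private lemma ncut_generic {y : Fin 20} (hy2 : 2 ≤ y.val) (hy10 : y.val ≤ 10)
    (S : Set (Fin 20)) (hS_small : ∀ w : Fin 20, w.val ≤ 10 → w ∉ S)
    (hS_leaf : ∀ w : Fin 20, 11 ≤ w.val → w.val = y.val + 9 → w ∈ S)
    (pf : y ∈ Sᶜ) :
    ¬ IsCutVertex (Gex.induce Sᶜ) ⟨y, pf⟩ := by
  rintro ⟨p, q, -, hnr⟩
  apply hnr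
  have m0 : (⟨0, by omega⟩ : Fin 20) ∈ Sᶜ := hS_small _ (by simp only [Fin.val_mk]; omega)
  have mt : (⟨⟨0, by omega⟩, m0⟩ : ↥Sᶜ) ∈ ({(⟨y, pf⟩ : ↥Sᶜ)}ᶜ : Set ↥Sᶜ) := by
    simp only [Set.mem_compl_iff, Set.mem_singleton_iff]
    intro h
    have h2 : (0:ℕ) = y.val := congrArg (fun t => ((t : ↥Sᶜ) : Fin 20).val) h
    omega
  have key : ∀ r, ((Gex.induce Sᶜ).induce ({(⟨y, pf⟩ : ↥Sᶜ)}ᶜ : Set ↥Sᶜ)).Reachable r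
      ⟨⟨⟨0, by omega⟩, m0⟩, mt⟩ := by
    intro r
    refine reach_of_step ((Gex.induce Sᶜ).induce ({(⟨y, pf⟩ : ↥Sᶜ)}ᶜ : Set ↥Sᶜ)) _
      (fun r : ↥({(⟨y, pf⟩ : ↥Sᶜ)}ᶜ : Set ↥Sᶜ) => ((r : ↥Sᶜ) : Fin 20).val) ?_
      (((r : ↥Sᶜ) : Fin 20).val) r le_rfl
    intro v hv
    have hw20 := ((v : ↥Sᶜ) : Fin 20).isLt
    have hwS : ((v : ↥Sᶜ) : Fin 20) ∉ S := (v : ↥Sᶜ).2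
    have hwy : ((v : ↥Sᶜ) : Fin 20).val ≠ y.val := by
      intro h
      exact v.2 (Subtype.ext (Fin.ext h))
    have hw0 : ((v : ↥Sᶜ) : Fin 20).val ≠ 0 := by
      intro h
      apply hv
      have hfin : ((v : ↥Sᶜ) : Fin 20) = ⟨0, by omega⟩ := Fin.ext (by simp only [Fin.val_mk]; omega)
      exact Subtype.ext (Subtype.ext hfin)
    by_cases h10 : ((v : ↥Sᶜ) : Fin 20).val ≤ 10
    · refine ⟨⟨⟨⟨0, by omega⟩, m0⟩, mt⟩, ?_, ?_⟩
      · show Gex.Adj ((v : ↥Sᶜ) : Fin 20) ⟨0, by omega⟩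
        exact adjv (by omega) (by unfold rel; omega)
      · show (⟨0, by omega⟩ : Fin 20).val < ((v : ↥Sᶜ) : Fin 20).val
        simp only [Fin.val_mk]; omega
    · have hwx : ((v : ↥Sᶜ) : Fin 20).val ≠ y.val + 9 := fun h =>
        hwS (hS_leaf _ (by omega) h)
      have m1 : (⟨((v : ↥Sᶜ) : Fin 20).val - 9, by omega⟩ : Fin 20) ∈ Sᶜ :=
        hS_small _ (by simp only [Fin.val_mk]; omega)
      have m2 : (⟨⟨((v : ↥Sᶜ) : Fin 20).val - 9, by omega⟩, m1⟩ : ↥Sᶜ) ∈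
          ({(⟨y, pf⟩ : ↥Sᶜ)}ᶜ : Set ↥Sᶜ) := by
        simp only [Set.mem_compl_iff, Set.mem_singleton_iff]
        intro h
        have h2 : ((v : ↥Sᶜ) : Fin 20).val - 9 = y.val :=
          congrArg (fun t => ((t : ↥Sᶜ) : Fin 20).val) h
        omega
      refine ⟨⟨⟨⟨((v : ↥Sᶜ) : Fin 20).val - 9, by omega⟩, m1⟩, m2⟩, ?_, ?_⟩
      · show Gex.Adj ((v : ↥Sᶜ) : Fin 20) ⟨((v : ↥Sᶜ) : Fin 20).val - 9, by omega⟩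
        exact adjv (by omega) (by unfold rel; omega)
      · show (⟨((v : ↥Sᶜ) : Fin 20).val - 9, by omega⟩ : Fin 20).val <
          ((v : ↥Sᶜ) : Fin 20).val
        simp only [Fin.val_mk]; omega
  exact (key p).trans (key q).symm

private lemma badLeaf_big {x : Fin 20} (h11 : 11 ≤ x.val) (h19 : x.val ≤ 19) :
    IsBadLeaf Gex x := by
  have hx20 := x.isLt
  refine ⟨isLeaf_big h11, ⟨x.val - 9, by omega⟩, ?_, ?_, ?_, ?_⟩
  · show rel (x.val - 9) x.val ∨ rel x.val (x.val - 9)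
    unfold rel; omega
  · intro z hz hadj
    have h := (adj_iff_of_mid (a := ⟨x.val - 9, by omega⟩)
      (show 2 ≤ x.val - 9 by omega) (show x.val - 9 ≤ 10 by omega) z).mp hadj
    have h' : z.val = 0 ∨ z.val = 1 ∨ z.val = x.val - 9 + 9 := h
    rcases h' with h' | h' | h'
    · exact absurd hz (not_isLeaf_small (by omega))
    · exact absurd hz (not_isLeaf_small (by omega))
    · exact Fin.ext (by omega)
  · -- IsCutVertex
    have mx : x ∈ ({(⟨x.val - 9, by omega⟩ : Fin 20)}ᶜ : Set (Fin 20)) := by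
      simp only [Set.mem_compl_iff, Set.mem_singleton_iff]
      intro h
      have h2 : x.val = x.val - 9 := congrArg Fin.val h
      omega
    have m0 : (⟨0, by omega⟩ : Fin 20) ∈ ({(⟨x.val - 9, by omega⟩ : Fin 20)}ᶜ : Set (Fin 20)) := by
      simp only [Set.mem_compl_iff, Set.mem_singleton_iff]
      intro h
      have h2 : (0:ℕ) = x.val - 9 := congrArg Fin.val h
      omega
    refine ⟨⟨x, mx⟩, ⟨⟨0, by omega⟩, m0⟩, ?_, ?_⟩
    · show Gex.Reachable x ⟨0, by omega⟩
      have a1 : Gex.Adj x ⟨x.val - 9, by omega⟩ := adjv (by omega) (by unfold rel; omega)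
      have a2 : Gex.Adj (⟨x.val - 9, by omega⟩ : Fin 20) ⟨0, by omega⟩ := by
        show rel (x.val - 9) 0 ∨ rel 0 (x.val - 9)
        unfold rel; omega
      exact a1.reachable.trans a2.reachable
    · intro hr
      have hba := reachable_eq_of_isolated ?_ hr
      · have h2 : (0:ℕ) = x.val :=
          congrArg (fun t => ((t : ({(⟨x.val - 9, by omega⟩ : Fin 20)}ᶜ : Set (Fin 20))) :
            Fin 20).val) hba
        omega
      · intro c hc
        have hadj : Gex.Adj x (c : Fin 20) := hc
        have hcv : (c : Fin 20).val = x.val - 9 := (adj_iff_of_big h11 _).mp hadj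
        exact c.2 (Fin.ext (by simp only [Fin.val_mk]; omega))
  · -- not cut vertex after removing leaves
    refine ncut_generic (show 2 ≤ x.val - 9 by omega) (show x.val - 9 ≤ 10 by omega)
      (leafNbrs Gex ⟨x.val - 9, by omega⟩) ?_ ?_ _
    · intro w hw hm
      exact not_isLeaf_small hw hm.1
    · intro w hw1 hw2
      have hw2' : w.val = x.val - 9 + 9 := hw2
      refine ⟨isLeaf_big hw1, ?_⟩
      show rel (x.val - 9) w.val ∨ rel w.val (x.val - 9)
      unfold rel; omega
private lemma no_factor : ¬ ∃ F : SimpleGraph (Fin 20), IsTwoFourFactor Gex.square F := by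
  rintro ⟨F, hle, -, hdeg⟩
  have key : ∀ w : Fin 20, 11 ≤ w.val →
      w ∈ F.neighborSet ⟨0, by omega⟩ ∪ F.neighborSet ⟨1, by omega⟩ := by
    intro w h11
    have hw20 := w.isLt
    have hsq : ∀ z, F.Adj w z → z.val = w.val - 9 ∨ z.val = 0 ∨ z.val = 1 := by
      intro z hz
      obtain ⟨hne, hcase⟩ := hle hz
      rcases hcase with h | ⟨u, hu1, hu2⟩
      · exact Or.inl ((adj_iff_of_big h11 z).mp h)
      · have hu : u.val = w.val - 9 := (adj_iff_of_big h11 u).mp hu1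
        have hz' := (adj_iff_of_mid (a := u) (by omega) (by omega) z).mp hu2
        rcases hz' with h | h | h
        · exact Or.inr (Or.inl h)
        · exact Or.inr (Or.inr h)
        · exact absurd (Fin.ext (by omega) : w = z) hne
    have hsub : F.neighborSet w ⊆
        {(⟨w.val - 9, by omega⟩ : Fin 20), ⟨0, by omega⟩, ⟨1, by omega⟩} := by
      intro z hz
      simp only [Set.mem_insert_iff, Set.mem_singleton_iff, Fin.ext_iff, Fin.val_mk]
      have := hsq z hz
      omega
    have h3 : ({(⟨w.val - 9, by omega⟩ : Fin 20), ⟨0, by omega⟩, ⟨1, by omega⟩} :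
        Set (Fin 20)).ncard ≤ 3 := by
      have i1 := Set.ncard_insert_le (⟨w.val - 9, by omega⟩ : Fin 20)
        ({⟨0, by omega⟩, ⟨1, by omega⟩} : Set (Fin 20))
      have i2 := Set.ncard_insert_le (⟨0, by omega⟩ : Fin 20)
        ({⟨1, by omega⟩} : Set (Fin 20))
      rw [Set.ncard_singleton] at i2
      omega
    have hle3 : degCount F w ≤ 3 := by
      have := Set.ncard_le_ncard hsub (Set.toFinite _)
      unfold degCount
      omega
    have hcard : degCount F w = 2 := by rcases hdeg w with h | h <;> omega
    have hmem : (⟨0, by omega⟩ : Fin 20) ∈ F.neighborSet w ∨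
        (⟨1, by omega⟩ : Fin 20) ∈ F.neighborSet w := by
      by_contra hcon
      push_neg at hcon
      have hsub1 : F.neighborSet w ⊆ {(⟨w.val - 9, by omega⟩ : Fin 20)} := by
        intro z hz
        rcases hsq z hz with h | h | h
        · exact Fin.ext (by simp only [Fin.val_mk]; omega)
        · exact absurd hz (by rw [show z = (⟨0, by omega⟩ : Fin 20) from Fin.ext
            (by simp only [Fin.val_mk]; omega)]; exact hcon.1)
        · exact absurd hz (by rw [show z = (⟨1, by omega⟩ : Fin 20) from Fin.ext
            (by simp only [Fin.val_mk]; omega)]; exact hcon.2)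
      have := Set.ncard_le_ncard hsub1 (Set.toFinite _)
      rw [Set.ncard_singleton] at this
      unfold degCount at hcard
      omega
    rcases hmem with h | h
    · exact Set.mem_union_left _ ((F.mem_neighborSet _ _).mpr
        ((F.mem_neighborSet _ _).mp h).symm)
    · exact Set.mem_union_right _ ((F.mem_neighborSet _ _).mpr
        ((F.mem_neighborSet _ _).mp h).symm)
  -- final counting
  have hdeg0 := hdeg ⟨0, by omega⟩
  have hdeg1 := hdeg ⟨1, by omega⟩
  have hsubS : ↑(Finset.univ.filter (fun w : Fin 20 => 11 ≤ w.val)) ⊆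
      F.neighborSet ⟨0, by omega⟩ ∪ F.neighborSet ⟨1, by omega⟩ := by
    intro w hw
    simp only [Finset.coe_filter, Finset.mem_univ, true_and, Set.mem_setOf_eq] at hw
    exact key w hw
  have h9 := Set.ncard_le_ncard hsubS (Set.toFinite _)
  rw [Set.ncard_coe_finset] at h9
  have hcardS : (Finset.univ.filter (fun w : Fin 20 => 11 ≤ w.val)).card = 9 := by decide
  have hun := Set.ncard_union_le (F.neighborSet (⟨0, by omega⟩ : Fin 20))
    (F.neighborSet (⟨1, by omega⟩ : Fin 20))
  unfold degCount at hdeg0 hdeg1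
  omega

/-- There is a finite connected simple graph without
non-trivial bridges, having two bad leaves at distance exactly `4`, whose
square has no `[2,4]`-factor. -/
theorem exists_graph_badLeaves_dist_four_square_no_twoFourFactor :
    ∃ (m : ℕ) (G : SimpleGraph (Fin m)), G.Connected ∧
      (∀ e : Sym2 (Fin m), G.IsBridge e → IsTrivialBridge G e) ∧
      (∃ x₁ x₂ : Fin m, IsBadLeaf G x₁ ∧ IsBadLeaf G x₂ ∧ G.dist x₁ x₂ = 4) ∧
      ¬ ∃ F : SimpleGraph (Fin m), IsTwoFourFactor G.square F :=
  ⟨20, Gex, conn, bridges,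
    ⟨⟨11, by omega⟩, ⟨12, by omega⟩,
      badLeaf_big (le_refl 11) ((by omega : (11:ℕ) ≤ 19)),
      badLeaf_big ((by omega : (11:ℕ) ≤ 12)) ((by omega : (12:ℕ) ≤ 19)),
      dist_x⟩,
    no_factor⟩
end

section
/- In any finite connected simple graph G, any two distinct bad leaves of G are at distance at least 3 in G. -/
open SimpleGraph

variable {V : Type*}

section Aux
variable {V : Type*}

lemma leaf_nbr_unique (G : SimpleGraph V) {x u w : V} (hx : IsLeaf G x)
    (hu : G.Adj x u) (hw : G.Adj x w) : u = w := by
  obtain ⟨a, ha⟩ := Set.ncard_eq_one.mp hx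
  have h1 : u ∈ G.neighborSet x := hu
  have h2 : w ∈ G.neighborSet x := hw
  rw [ha, Set.mem_singleton_iff] at h1 h2
  rw [h1, h2]

lemma reachable_induce_of_support (G : SimpleGraph V) {s : Set V} :
    ∀ {a b : V} (p : G.Walk a b), (∀ x ∈ p.support, x ∈ s) →
    ∀ (ha : a ∈ s) (hb : b ∈ s),
      (G.induce s).Reachable ⟨a, ha⟩ ⟨b, hb⟩ := by
  intro a b p
  induction p with
  | nil => intro _ ha hb; rfl
  | @cons a c b hadj q ih =>
    intro h ha hb
    have hc : c ∈ s := h c (by simp)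
    have h1 : (G.induce s).Adj ⟨a, ha⟩ ⟨c, hc⟩ := hadj
    exact h1.reachable.trans (ih (fun x hx => h x (by simp [hx])) hc hb)

lemma leaf_not_cutVertex (G : SimpleGraph V) {v : V} (hv : IsLeaf G v) :
    ¬ IsCutVertex G v := by
  classical
  rintro ⟨a, b, hr, hnr⟩
  have ha : (a : V) ≠ v := a.2
  have hb : (b : V) ≠ v := b.2
  obtain ⟨w⟩ := hr
  have hp := w.toPath.2
  set p : G.Walk (a : V) (b : V) := w.toPath.1 with hpdef
  have hvs : v ∉ p.support := by
    intro hvsup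
    set q := p.takeUntil v hvsup with hq
    set r := p.dropUntil v hvsup with hr'
    have hspec : q.append r = p := p.take_spec hvsup
    -- q : Walk a v is not nil
    have hqnil : ¬ q.Nil := by
      intro h
      exact ha (SimpleGraph.Walk.Nil.eq h)
    have hrnil : ¬ r.Nil := by
      intro h
      exact hb (SimpleGraph.Walk.Nil.eq h).symm
    -- decompose r
    obtain ⟨u₂, h₂, r₂, hr₂⟩ := SimpleGraph.Walk.not_nil_iff.mp hrnil
    -- decompose q.reverse
    have hqrnil : ¬ q.reverse.Nil := by
      intro h
      exact ha (SimpleGraph.Walk.Nil.eq h).symm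
    obtain ⟨u₁, h₁, q₁, hq₁⟩ := SimpleGraph.Walk.not_nil_iff.mp hqrnil
    have hu : u₁ = u₂ := leaf_nbr_unique G hv h₁ h₂
    -- u₁ ∈ q.support
    have hu1 : u₁ ∈ q.support := by
      have : u₁ ∈ q.reverse.support := by rw [hq₁]; simp
      rwa [SimpleGraph.Walk.support_reverse, List.mem_reverse] at this
    -- u₂ ∈ r.support.tail
    have hu2 : u₂ ∈ r.support.tail := by
      rw [hr₂]; simp
    -- nodup of appended support
    have hnodup : (q.append r).support.Nodup := by
      rw [hspec]; exact hp.support_nodup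
    rw [SimpleGraph.Walk.support_append, List.nodup_append] at hnodup
    exact hnodup.2.2 u₁ hu1 u₂ hu2 hu
  have hsub : ∀ x ∈ p.support, x ∈ ({v}ᶜ : Set V) := by
    intro x hx
    simp only [Set.mem_compl_iff, Set.mem_singleton_iff]
    intro h; exact hvs (h ▸ hx)
  have := reachable_induce_of_support G p hsub a.2 b.2
  exact hnr (by simpa using this)

end Aux

/-- In a finite connected simple graph, any two distinct bad
leaves are at distance at least `3`. -/
theorem badLeaves_dist_ge_three
    {V : Type*} [Fintype V] (G : SimpleGraph V) (hconn : G.Connected)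
    (x₁ x₂ : V) (h₁ : IsBadLeaf G x₁) (h₂ : IsBadLeaf G x₂) (hne : x₁ ≠ x₂) :
    3 ≤ G.dist x₁ x₂ := by
  by_contra hlt
  push_neg at hlt
  have hr : G.Reachable x₁ x₂ := hconn.preconnected x₁ x₂
  have hd0 : G.dist x₁ x₂ ≠ 0 := by
    rw [SimpleGraph.dist_ne_zero_iff_ne_and_reachable]
    exact ⟨hne, hr⟩
  obtain ⟨p, hp⟩ := SimpleGraph.exists_walk_of_dist_ne_zero hd0
  interval_cases h : G.dist x₁ x₂
  · exact hd0 rfl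
  · -- adjacent
    have hadj : G.Adj x₁ x₂ := SimpleGraph.dist_eq_one_iff_adj.mp h
    obtain ⟨hl₁, y₁, hy₁, _, htc₁⟩ := h₁
    have : y₁ = x₂ := leaf_nbr_unique G hl₁ hy₁.symm hadj
    exact leaf_not_cutVertex G h₂.1 (this ▸ htc₁.1)
  · -- distance 2: walk of length 2
    clear h
    cases p with
    | nil => simp at hp
    | cons hadj1 q =>
      cases q with
      | nil => simp at hp
      | cons hadj2 q' =>
        cases q' with
        | nil =>
          obtain ⟨hl₂, y₂, hy₂, huniq₂, _⟩ := h₂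
          have : _ = y₂ := leaf_nbr_unique G hl₂ hadj2.symm hy₂.symm
          exact hne (huniq₂ x₁ h₁.1 (this ▸ hadj1.symm))
        | cons h3 q'' => simp at hp
end
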